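/- Let X = [0,1]^ℤ with metric d(x,y) = ∑_{n∈ℤ} 2^{−|n|}|x_n − y_n|. Then the minimal number N(X,d,ε) of ε-balls needed to cover X satisfies N(X,d,ε) ≥ (1 + ⌊1/(Cε)⌋)^{c·log(1/ε)} for suitable constants C, c > 0 and small ε, and consequently the lower box dimension of (X,d) is infinite: liminf_{ε→0} log N(X,d,ε) / log(1/ε) = ∞. -/

import Mathlib

open Real Filter Set Topology

noncomputable def cubeDist (x y : ℤ → Set.Icc (0 : ℝ) 1) : ℝ :=
  ∑' n : ℤ, (2 : ℝ)⁻¹ ^ n.natAbs * |((x n : ℝ)) - ((y n : ℝ))|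

noncomputable def cubeCovNum (ε : ℝ) : ℕ :=
  sInf { k | ∃ F : Finset (ℤ → Set.Icc (0 : ℝ) 1), F.card = k ∧
      ∀ x : ℤ → Set.Icc (0 : ℝ) 1, ∃ c ∈ F, cubeDist c x < ε }

lemma summable_base : Summable (fun n : ℤ => (2:ℝ)⁻¹ ^ n.natAbs) := by
  apply Summable.of_nat_of_neg <;>
  · simp only [Int.natAbs_natCast, Int.natAbs_neg]
    exact summable_geometric_of_lt_one (by norm_num) (by norm_num)

lemma abs_diff_le_one (x y : Set.Icc (0:ℝ) 1) : |((x : ℝ)) - ((y : ℝ))| ≤ 1 := by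
  have hx := x.2; have hy := y.2
  simp only [Set.mem_Icc] at hx hy
  rw [abs_le]; constructor <;> linarith

lemma summable_term (x y : ℤ → Set.Icc (0:ℝ) 1) :
    Summable (fun n : ℤ => (2:ℝ)⁻¹ ^ n.natAbs * |((x n : ℝ)) - ((y n : ℝ))|) := by
  apply Summable.of_nonneg_of_le (fun n => by positivity) (fun n => ?_) summable_base
  calc (2:ℝ)⁻¹ ^ n.natAbs * |((x n : ℝ)) - ((y n : ℝ))|
      ≤ (2:ℝ)⁻¹ ^ n.natAbs * 1 :=
        mul_le_mul_of_nonneg_left (abs_diff_le_one _ _) (by positivity)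
    _ = (2:ℝ)⁻¹ ^ n.natAbs := mul_one _

lemma single_le_cubeDist (x y : ℤ → Set.Icc (0:ℝ) 1) (n : ℤ) :
    (2:ℝ)⁻¹ ^ n.natAbs * |((x n : ℝ)) - ((y n : ℝ))| ≤ cubeDist x y :=
  Summable.le_tsum (summable_term x y) n (fun m _ => by positivity)

lemma cubeDist_triangle (z x y : ℤ → Set.Icc (0:ℝ) 1) :
    cubeDist x y ≤ cubeDist z x + cubeDist z y := by
  unfold cubeDist
  rw [← Summable.tsum_add (summable_term z x) (summable_term z y)]
  apply Summable.tsum_le_tsum _ (summable_term x y) ((summable_term z x).add (summable_term z y))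
  intro n
  have : |((x n : ℝ)) - ((y n : ℝ))| ≤ |((z n : ℝ)) - ((x n : ℝ))| + |((z n : ℝ)) - ((y n : ℝ))| := by
    rw [abs_sub_comm ((z n : ℝ))]
    exact abs_sub_le _ _ _
  nlinarith [pow_pos (by norm_num : (0:ℝ) < 2⁻¹) n.natAbs, abs_nonneg (((x n : ℝ)) - ((y n : ℝ)))]

/-- grid point supported on coordinates 0..m-1 -/
noncomputable def gridPt (m K : ℕ) (f : Fin m → Fin (K+1)) : ℤ → Set.Icc (0:ℝ) 1 :=
  fun n => if h : 0 ≤ n ∧ n < m then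
    ⟨((f ⟨n.toNat, by omega⟩ : ℕ) : ℝ) / K, by
      constructor
      · positivity
      · apply div_le_one_of_le₀ _ (by positivity)
        exact_mod_cast Nat.le_of_lt_succ (f _).2⟩
  else ⟨0, by norm_num⟩

lemma gridPt_apply_fin (m K : ℕ) (f : Fin m → Fin (K+1)) (i : Fin m) :
    ((gridPt m K f (i : ℤ) : ℝ)) = ((f i : ℕ) : ℝ) / K := by
  have h : (0:ℤ) ≤ (i:ℤ) ∧ (i:ℤ) < m := ⟨Int.ofNat_nonneg _, by exact_mod_cast i.2⟩
  simp only [gridPt, dif_pos h]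
  norm_num

lemma gridPt_sep (m K : ℕ) (hm : 1 ≤ m) (hK : 1 ≤ K) (f g : Fin m → Fin (K+1)) (hfg : f ≠ g) :
    (2:ℝ)⁻¹ ^ (m-1) / K ≤ cubeDist (gridPt m K f) (gridPt m K g) := by
  obtain ⟨i, hi⟩ := Function.ne_iff.mp hfg
  refine le_trans ?_ (single_le_cubeDist _ _ (i : ℤ))
  rw [gridPt_apply_fin, gridPt_apply_fin]
  have hK' : (0:ℝ) < K := by exact_mod_cast hK
  have h1 : (1:ℝ) ≤ |((f i : ℕ) : ℝ) - ((g i : ℕ) : ℝ)| := by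
    have hne : (f i : ℕ) ≠ (g i : ℕ) := fun h => hi (Fin.ext h)
    rcases lt_or_gt_of_ne hne with h | h
    · rw [abs_sub_comm, le_abs]; left
      have : (f i : ℕ) + 1 ≤ (g i : ℕ) := h
      have : ((f i : ℕ) : ℝ) + 1 ≤ ((g i : ℕ) : ℝ) := by exact_mod_cast this
      linarith
    · rw [le_abs]; left
      have : (g i : ℕ) + 1 ≤ (f i : ℕ) := h
      have : ((g i : ℕ) : ℝ) + 1 ≤ ((f i : ℕ) : ℝ) := by exact_mod_cast this
      linarith
  have h2 : |((f i : ℕ) : ℝ) / K - ((g i : ℕ) : ℝ) / K| = |((f i : ℕ) : ℝ) - ((g i : ℕ) : ℝ)| / K := by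
    rw [div_sub_div_same, abs_div, abs_of_pos hK']
  rw [h2]
  have h3 : ((i : ℤ).natAbs) ≤ m - 1 := by
    have := i.2; omega
  have h4 : (2:ℝ)⁻¹ ^ (m-1) ≤ (2:ℝ)⁻¹ ^ ((i:ℤ).natAbs) :=
    pow_le_pow_of_le_one (by norm_num) (by norm_num) h3
  calc (2:ℝ)⁻¹ ^ (m-1) / K = (2:ℝ)⁻¹ ^ (m-1) * (1 / K) := by ring
    _ ≤ (2:ℝ)⁻¹ ^ ((i:ℤ).natAbs) * (|((f i : ℕ) : ℝ) - ((g i : ℕ) : ℝ)| / K) := by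
        apply mul_le_mul h4 _ (by positivity) (by positivity)
        gcongr
    _ = _ := by rfl


lemma cover_card_ge (m K : ℕ) (hm : 1 ≤ m) (hK : 1 ≤ K) (ε : ℝ) (hε : 0 < ε)
    (hsep : ε * K * 2^m ≤ 1)
    (F : Finset (ℤ → Set.Icc (0:ℝ) 1))
    (hF : ∀ x, ∃ c ∈ F, cubeDist c x < ε) :
    (K+1)^m ≤ F.card := by
  classical
  have hK' : (0:ℝ) < K := by exact_mod_cast hK
  have hm2 : (2:ℝ)^m = 2 * 2^(m-1) := by
    rw [← pow_succ']; congr 1; omega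
  have hsep' : ∀ f g : Fin m → Fin (K+1), f ≠ g →
      2*ε ≤ cubeDist (gridPt m K f) (gridPt m K g) := by
    intro f g hfg
    refine le_trans ?_ (gridPt_sep m K hm hK f g hfg)
    have : (2:ℝ)⁻¹ ^ (m-1) / K = 1 / (K * 2^(m-1)) := by
      rw [inv_pow]; field_simp
    rw [this, le_div_iff₀ (by positivity)]
    calc 2*ε*(K*2^(m-1)) = ε * K * 2^m := by rw [hm2]; ring
      _ ≤ 1 := hsep
  have choice : ∀ f : Fin m → Fin (K+1), ∃ c ∈ F, cubeDist c (gridPt m K f) < ε :=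
    fun f => hF _
  choose c hcF hcd using choice
  have hinj : Function.Injective c := by
    intro f g h
    by_contra hfg
    have h1 := hcd f
    have h2 := hcd g
    rw [h] at h1
    have h3 := cubeDist_triangle (c g) (gridPt m K f) (gridPt m K g)
    have h4 := hsep' f g hfg
    linarith
  calc (K+1)^m = (Finset.univ : Finset (Fin m → Fin (K+1))).card := by
        simp [Fintype.card_fun]
    _ ≤ F.card := Finset.card_le_card_of_injOn c (fun f _ => hcF f) (hinj.injOn)


lemma hgeo : Summable (fun n : ℕ => (2:ℝ)⁻¹ ^ n) :=
  summable_geometric_of_lt_one (by norm_num) (by norm_num)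

lemma hgeo_tsum : ∑' n : ℕ, (2:ℝ)⁻¹ ^ n = 2 := by
  rw [tsum_geometric_of_lt_one (by norm_num) (by norm_num)]; norm_num

lemma fun_nat_eq : (fun n : ℕ => (2:ℝ)⁻¹ ^ ((n:ℤ)).natAbs) = fun n : ℕ => (2:ℝ)⁻¹ ^ n := by
  funext n; simp

lemma fun_neg_eq : (fun n : ℕ => (2:ℝ)⁻¹ ^ (-((n:ℤ)+1)).natAbs)
    = fun n : ℕ => (2:ℝ)⁻¹ * (2:ℝ)⁻¹ ^ n := by
  funext n
  have h : (-((n:ℤ)+1)).natAbs = n+1 := by omega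
  rw [h, pow_succ]; ring

lemma tsum_base_eq : ∑' n : ℤ, (2:ℝ)⁻¹ ^ n.natAbs = 3 := by
  rw [tsum_of_nat_of_neg_add_one (by rw [fun_nat_eq]; exact hgeo)
      (by rw [fun_neg_eq]; exact hgeo.mul_left _)]
  rw [fun_nat_eq, fun_neg_eq, tsum_mul_left, hgeo_tsum]
  norm_num

lemma summable_base' : Summable (fun n : ℤ => (2:ℝ)⁻¹ ^ n.natAbs) :=
  Summable.of_nat_of_neg_add_one (by rw [fun_nat_eq]; exact hgeo)
    (by rw [fun_neg_eq]; exact hgeo.mul_left _)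

lemma summable_tail (m : ℕ) :
    Summable (fun n : ℤ => if m < n.natAbs then (2:ℝ)⁻¹ ^ n.natAbs else 0) := by
  refine Summable.of_nonneg_of_le (fun n => by positivity) (fun n => ?_) summable_base'
  split <;> [exact le_refl _; positivity]

lemma summable_gnat (m : ℕ) : Summable (fun n : ℕ => if m < n then (2:ℝ)⁻¹ ^ n else 0) := by
  refine Summable.of_nonneg_of_le (fun n => by positivity) (fun n => ?_) hgeo
  split <;> [exact le_refl _; positivity]

lemma tsum_gnat (m : ℕ) :
    ∑' n : ℕ, (if m < n then (2:ℝ)⁻¹ ^ n else 0) = (2:ℝ)⁻¹ ^ m := by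
  rw [← Summable.sum_add_tsum_nat_add (f := fun n : ℕ => if m < n then (2:ℝ)⁻¹ ^ n else 0)
      (m+1) (summable_gnat m)]
  have e0 : ∑ i ∈ Finset.range (m+1), (if m < i then (2:ℝ)⁻¹ ^ i else 0) = 0 := by
    apply Finset.sum_eq_zero
    intro i hi
    simp only [Finset.mem_range] at hi
    rw [if_neg (by omega)]
  have e1 : (fun i : ℕ => if m < i + (m+1) then (2:ℝ)⁻¹ ^ (i + (m+1)) else 0)
      = fun i : ℕ => ((2:ℝ)⁻¹^(m+1)) * (2:ℝ)⁻¹ ^ i := by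
    funext i
    rw [if_pos (by omega), ← pow_add]
    ring_nf
  rw [e0, zero_add, e1, tsum_mul_left, hgeo_tsum, pow_succ]
  ring

lemma tsum_tail_le (m : ℕ) :
    (∑' n : ℤ, if m < n.natAbs then (2:ℝ)⁻¹ ^ n.natAbs else 0) ≤ 2 * (2:ℝ)⁻¹ ^ m := by
  have fn : (fun n : ℕ => if m < ((n:ℤ)).natAbs then (2:ℝ)⁻¹ ^ ((n:ℤ)).natAbs else 0)
      = fun n : ℕ => if m < n then (2:ℝ)⁻¹ ^ n else 0 := by
    funext n; simp
  have fneg : (fun n : ℕ => if m < (-((n:ℤ)+1)).natAbs then (2:ℝ)⁻¹ ^ (-((n:ℤ)+1)).natAbs else 0)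
      = fun n : ℕ => if m < n+1 then (2:ℝ)⁻¹ ^ (n+1) else 0 := by
    funext n
    have h : (-((n:ℤ)+1)).natAbs = n+1 := by omega
    rw [h]
  have hshift : Summable (fun n : ℕ => if m < n+1 then (2:ℝ)⁻¹ ^ (n+1) else 0) := by
    refine Summable.of_nonneg_of_le (fun n => by positivity) (fun n => ?_)
      (hgeo.mul_left (2:ℝ)⁻¹)
    split
    · rw [pow_succ]; exact le_of_eq (by ring)
    · positivity
  have e2 : ∑' n : ℕ, (if m < n+1 then (2:ℝ)⁻¹ ^ (n+1) else 0) ≤ (2:ℝ)⁻¹ ^ m := by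
    have key := Summable.tsum_eq_zero_add (summable_gnat m)
    have hg0 : (if m < 0 then (2:ℝ)⁻¹ ^ 0 else 0) = 0 := by rw [if_neg (by omega)]
    rw [hg0, zero_add] at key
    rw [← key, tsum_gnat m]
  rw [tsum_of_nat_of_neg_add_one (by rw [fn]; exact summable_gnat m) (by rw [fneg]; exact hshift)]
  rw [fn, fneg, tsum_gnat m]
  linarith [e2]

noncomputable def coverPt (m K : ℕ) (f : (Finset.Icc (-(m:ℤ)) (m:ℤ)) → Fin (K+1)) :
    ℤ → Set.Icc (0:ℝ) 1 :=
  fun n => if h : n ∈ Finset.Icc (-(m:ℤ)) (m:ℤ) then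
    ⟨((f ⟨n, h⟩ : ℕ) : ℝ) / K, by
      constructor
      · positivity
      · apply div_le_one_of_le₀ _ (by positivity)
        exact_mod_cast Nat.le_of_lt_succ (f _).2⟩
  else ⟨0, by norm_num⟩

lemma cover_exists (ε : ℝ) (hε : 0 < ε) :
    ∃ F : Finset (ℤ → Set.Icc (0:ℝ) 1), ∀ x, ∃ c ∈ F, cubeDist c x < ε := by
  classical
  obtain ⟨m, hm⟩ := pow_unbounded_of_one_lt (4/ε) (one_lt_two (α := ℝ))
  set K := ⌊6/ε⌋₊ + 1 with hKdef
  have hK6 : 6/ε < K := by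
    have := Nat.lt_floor_add_one (6/ε)
    push_cast [hKdef]; linarith
  have hK0 : (0:ℝ) < K := lt_trans (by positivity) hK6
  refine ⟨Finset.image (coverPt m K) Finset.univ, fun x => ?_⟩
  have hxK : ∀ n : ℤ, ⌊(x n : ℝ) * K⌋₊ < K + 1 := by
    intro n
    have h1 : (x n : ℝ) * K ≤ K := by
      have := (x n).2.2
      nlinarith
    calc ⌊(x n : ℝ) * K⌋₊ ≤ ⌊(K:ℝ)⌋₊ := Nat.floor_mono h1
      _ = K := Nat.floor_natCast K
      _ < K + 1 := Nat.lt_succ_self K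
  set f : (Finset.Icc (-(m:ℤ)) (m:ℤ)) → Fin (K+1) :=
    fun p => ⟨⌊(x p.1 : ℝ) * K⌋₊, hxK p.1⟩ with hf
  refine ⟨coverPt m K f, Finset.mem_image_of_mem _ (Finset.mem_univ f), ?_⟩
  set c := coverPt m K f with hc
  -- pointwise bounds
  have hptin : ∀ n : ℤ, n ∈ Finset.Icc (-(m:ℤ)) (m:ℤ) → |((c n : ℝ)) - ((x n : ℝ))| ≤ 1/K := by
    intro n hn
    have hcn : ((c n : ℝ)) = (⌊(x n : ℝ) * K⌋₊ : ℝ) / K := by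
      simp only [hc, coverPt, dif_pos hn]; rfl
    have hx0 : (0:ℝ) ≤ (x n : ℝ) := (x n).2.1
    have h1 : (⌊(x n : ℝ) * K⌋₊ : ℝ) ≤ (x n : ℝ) * K := Nat.floor_le (by positivity)
    have h2 : (x n : ℝ) * K < (⌊(x n : ℝ) * K⌋₊ : ℝ) + 1 := Nat.lt_floor_add_one _
    rw [hcn]
    have e : ((⌊(x n : ℝ)*K⌋₊ : ℝ))/K - ((x n : ℝ)) = (((⌊(x n : ℝ)*K⌋₊ : ℝ)) - ((x n : ℝ))*K)/K := by
      field_simp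
    rw [e, abs_div, abs_of_pos hK0]
    gcongr
    rw [abs_le]
    constructor <;> linarith
  have hptout : ∀ n : ℤ, n ∉ Finset.Icc (-(m:ℤ)) (m:ℤ) → |((c n : ℝ)) - ((x n : ℝ))| ≤ 1 :=
    fun n _ => abs_diff_le_one _ _
  -- sum bound
  have hB : cubeDist c x ≤ ∑' n : ℤ, ((2:ℝ)⁻¹ ^ n.natAbs * (1/(K:ℝ))
      + (if m < n.natAbs then (2:ℝ)⁻¹ ^ n.natAbs else 0)) := by
    apply Summable.tsum_le_tsum _ (summable_term c x)
    · exact ((summable_base'.mul_right (1/(K:ℝ))).add (summable_tail m))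
    · intro n
      by_cases hn : n ∈ Finset.Icc (-(m:ℤ)) (m:ℤ)
      · have hna : ¬ (m < n.natAbs) := by
          simp only [Finset.mem_Icc] at hn; omega
        rw [if_neg hna, add_zero]
        exact mul_le_mul_of_nonneg_left (hptin n hn) (by positivity)
      · have hna : m < n.natAbs := by
          simp only [Finset.mem_Icc] at hn; omega
        rw [if_pos hna]
        have : (2:ℝ)⁻¹ ^ n.natAbs * |((c n : ℝ)) - ((x n : ℝ))| ≤ (2:ℝ)⁻¹ ^ n.natAbs * 1 :=
          mul_le_mul_of_nonneg_left (hptout n hn) (by positivity)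
        have h0 : (0:ℝ) ≤ (2:ℝ)⁻¹ ^ n.natAbs * (1/(K:ℝ)) := by positivity
        linarith [this]
  have hsplit : ∑' n : ℤ, ((2:ℝ)⁻¹ ^ n.natAbs * (1/(K:ℝ))
      + (if m < n.natAbs then (2:ℝ)⁻¹ ^ n.natAbs else 0))
      = 3 * (1/(K:ℝ)) + ∑' n : ℤ, (if m < n.natAbs then (2:ℝ)⁻¹ ^ n.natAbs else 0) := by
    rw [Summable.tsum_add (summable_base'.mul_right (1/(K:ℝ))) (summable_tail m), tsum_mul_right, tsum_base_eq]
  have h3K : 3 * (1/(K:ℝ)) < ε/2 := by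
    have h6 : 6 < ε * K := by
      rw [div_lt_iff₀ hε] at hK6; linarith
    rw [mul_one_div, div_lt_div_iff₀ hK0 (by norm_num)]
    linarith
  have htail : 2 * (2:ℝ)⁻¹ ^ m < ε/2 := by
    have h4 : (0:ℝ) < 4/ε := by positivity
    have hi : ((2:ℝ)^m)⁻¹ < (4/ε)⁻¹ := by gcongr
    rw [inv_div] at hi
    rw [inv_pow]
    linarith
  calc cubeDist c x ≤ _ := hB
    _ = _ := hsplit
    _ ≤ 3 * (1/(K:ℝ)) + 2 * (2:ℝ)⁻¹^m := by linarith [tsum_tail_le m]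
    _ < ε := by linarith


lemma covnum_ge (m K : ℕ) (hm : 1 ≤ m) (hK : 1 ≤ K) (ε : ℝ) (hε : 0 < ε)
    (hsep : ε * K * 2^m ≤ 1) : (K+1)^m ≤ cubeCovNum ε := by
  have hne : Set.Nonempty { k | ∃ F : Finset (ℤ → Set.Icc (0 : ℝ) 1), F.card = k ∧
      ∀ x : ℤ → Set.Icc (0 : ℝ) 1, ∃ c ∈ F, cubeDist c x < ε } := by
    obtain ⟨F, hF⟩ := cover_exists ε hε
    exact ⟨F.card, F, rfl, hF⟩
  apply le_csInf hne
  rintro k ⟨F, rfl, hF⟩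
  exact cover_card_ge m K hm hK ε hε hsep F hF

lemma log_covnum_lower (ε : ℝ) (hε : 0 < ε) (hε2 : ε < Real.exp (-2)) :
    1 ≤ cubeCovNum ε ∧
    (Real.log (1/ε) - 1) * (Real.log (1/ε) / 4) ≤ Real.log (cubeCovNum ε) := by
  have hεinv : (1:ℝ) < 1/ε := by
    rw [lt_div_iff₀ hε, one_mul]
    calc ε < Real.exp (-2) := hε2
      _ < 1 := by rw [Real.exp_lt_one_iff]; norm_num
  set L := Real.log (1/ε) with hLdef
  have hL2 : 2 < L := by
    have : Real.log (Real.exp 2) < Real.log (1/ε) := by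
      apply Real.log_lt_log (Real.exp_pos 2)
      rw [lt_div_iff₀ hε]
      calc Real.exp 2 * ε < Real.exp 2 * Real.exp (-2) := by
            apply mul_lt_mul_of_pos_left hε2 (Real.exp_pos 2)
        _ = 1 := by rw [← Real.exp_add]; norm_num
    rwa [Real.log_exp] at this
  have hL0 : 0 < L := by linarith
  set m := ⌊L⌋₊ with hmdef
  have hm1 : 1 ≤ m := Nat.le_floor (by push_cast; linarith)
  set t := (1/ε) ^ ((1:ℝ)/4) with htdef
  have ht1 : 1 ≤ t := Real.one_le_rpow (le_of_lt hεinv) (by norm_num)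
  set K := ⌊t⌋₊ with hKdef
  have hK1 : 1 ≤ K := Nat.le_floor (by push_cast; linarith)
  -- the separation condition
  have hcond : ε * K * 2^m ≤ 1 := by
    have h1 : (K:ℝ) ≤ t := Nat.floor_le (by linarith)
    have h2 : (2:ℝ)^m ≤ (1/ε) ^ (Real.log 2) := by
      have hm : (m:ℝ) ≤ L := Nat.floor_le (le_of_lt hL0)
      have e1 : (2:ℝ)^m = Real.exp ((m:ℝ) * Real.log 2) := by
        rw [← Real.rpow_natCast 2 m, Real.rpow_def_of_pos (by norm_num)]
        rw [mul_comm]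
      have e2 : (1/ε) ^ (Real.log 2) = Real.exp (L * Real.log 2) := by
        rw [Real.rpow_def_of_pos (by positivity), mul_comm]
      rw [e1, e2]
      apply Real.exp_le_exp.mpr
      apply mul_le_mul_of_nonneg_right hm (Real.log_nonneg (by norm_num))
    have h3 : ε * K * 2^m ≤ ε * (t * (1/ε) ^ (Real.log 2)) := by
      have hK0 : (0:ℝ) ≤ K := by positivity
      have h2m : (0:ℝ) ≤ 2^m := by positivity
      have := mul_le_mul h1 h2 h2m (by linarith)
      nlinarith
    have h4 : ε * (t * (1/ε) ^ (Real.log 2)) = (1/ε) ^ ((1:ℝ)/4 + Real.log 2 - 1) := by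
      have hx : (0:ℝ) < 1/ε := by positivity
      have hee : ε = (1/ε) ^ (-1:ℝ) := by
        rw [Real.rpow_neg_one, one_div, inv_inv]
      rw [htdef]
      rw [show (1:ℝ)/4 + Real.log 2 - 1 = (1:ℝ)/4 + Real.log 2 + (-1) by ring]
      rw [Real.rpow_add hx, Real.rpow_add hx, ← hee]
      ring
    have h5 : (1/ε) ^ ((1:ℝ)/4 + Real.log 2 - 1) ≤ 1 := by
      apply Real.rpow_le_one_of_one_le_of_nonpos (le_of_lt hεinv)
      linarith [Real.log_two_lt_d9]
    calc ε * K * 2^m ≤ ε * (t * (1/ε) ^ (Real.log 2)) := h3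
      _ = _ := h4
      _ ≤ 1 := h5
  have hN := covnum_ge m K hm1 hK1 ε hε hcond
  have hNpos : 0 < cubeCovNum ε := lt_of_lt_of_le (Nat.one_le_pow m (K+1) (by omega)) hN
  refine ⟨hNpos, ?_⟩
  have hlogN : (m:ℝ) * Real.log (K+1) ≤ Real.log (cubeCovNum ε) := by
    have h1 : ((K+1)^m : ℝ) ≤ (cubeCovNum ε : ℝ) := by exact_mod_cast hN
    have h2 : Real.log ((K+1 : ℝ)^m) ≤ Real.log (cubeCovNum ε) := by
      apply Real.log_le_log (by positivity)
      exact_mod_cast h1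
    rwa [Real.log_pow] at h2
  have hlogK : L/4 ≤ Real.log (K+1) := by
    have h1 : t ≤ (K:ℝ) + 1 := le_of_lt (Nat.lt_floor_add_one t)
    have h2 : Real.log t ≤ Real.log ((K:ℝ)+1) := Real.log_le_log (by linarith) h1
    have h3 : Real.log t = (1/4) * L := by
      rw [htdef, Real.log_rpow (by positivity)]
    rw [h3] at h2
    calc L/4 = (1/4) * L := by ring
      _ ≤ _ := h2
  have hmL : L - 1 ≤ (m:ℝ) := by
    have := Nat.sub_one_lt_floor L
    linarith
  calc (L - 1) * (L/4) ≤ (m:ℝ) * Real.log (K+1) := by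
        apply mul_le_mul hmL hlogK (by linarith) (by positivity)
    _ ≤ _ := hlogN

theorem stmt_13 :
    (∃ C c : ℝ, 0 < C ∧ 0 < c ∧ ∃ ε₀ : ℝ, 0 < ε₀ ∧ ∀ ε : ℝ, 0 < ε → ε < ε₀ →
      ((1 + (⌊1 / (C * ε)⌋₊ : ℝ)) ^ (c * Real.log (1 / ε)) : ℝ) ≤ (cubeCovNum ε : ℝ)) ∧
    Tendsto (fun ε : ℝ => Real.log (cubeCovNum ε) / Real.log (1 / ε))
      (𝓝[>] (0 : ℝ)) atTop := by
  constructor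
  · refine ⟨1, 1/16, one_pos, by norm_num, Real.exp (-2), Real.exp_pos _, ?_⟩
    intro ε hε hε2
    obtain ⟨hN1, key⟩ := log_covnum_lower ε hε hε2
    have hεinv : (1:ℝ) < 1/ε := by
      rw [lt_div_iff₀ hε, one_mul]
      calc ε < Real.exp (-2) := hε2
        _ < 1 := by rw [Real.exp_lt_one_iff]; norm_num
    set L := Real.log (1/ε) with hLdef
    have hL2 : 2 < L := by
      have : Real.log (Real.exp 2) < Real.log (1/ε) := by
        apply Real.log_lt_log (Real.exp_pos 2)
        rw [lt_div_iff₀ hε]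
        calc Real.exp 2 * ε < Real.exp 2 * Real.exp (-2) := by
              apply mul_lt_mul_of_pos_left hε2 (Real.exp_pos 2)
          _ = 1 := by rw [← Real.exp_add]; norm_num
      rwa [Real.log_exp] at this
    have hNpos : (0:ℝ) < (cubeCovNum ε : ℝ) := by
      have : (1:ℝ) ≤ (cubeCovNum ε : ℝ) := by exact_mod_cast hN1
      linarith
    set B := 1 + (⌊1 / (1 * ε)⌋₊ : ℝ) with hBdef
    have hB1 : (1:ℝ) ≤ B := by
      have : (0:ℝ) ≤ (⌊1 / (1 * ε)⌋₊ : ℝ) := Nat.cast_nonneg _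
      rw [hBdef]; linarith
    have hB0 : (0:ℝ) < B := by linarith
    have hlogB : Real.log B ≤ 2 * L := by
      have h1 : B ≤ 2/ε := by
        rw [hBdef, one_mul]
        have h2 : (⌊1/ε⌋₊ : ℝ) ≤ 1/ε := Nat.floor_le (by positivity)
        have : (2:ℝ)/ε = 1/ε + 1/ε := by ring
        linarith
      have h2 : Real.log B ≤ Real.log (2/ε) := Real.log_le_log hB0 h1
      have h3 : Real.log (2/ε) = Real.log 2 + L := by
        rw [hLdef, div_eq_mul_one_div 2 ε, Real.log_mul (by norm_num) (by positivity)]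
      have h4 : Real.log 2 ≤ 1 := by
        have := Real.log_two_lt_d9; linarith
      linarith
    apply (Real.log_le_log_iff (Real.rpow_pos_of_pos hB0 _) hNpos).mp
    rw [Real.log_rpow hB0]
    calc 1/16 * L * Real.log B ≤ 1/16 * L * (2 * L) := by
          apply mul_le_mul_of_nonneg_left hlogB (by nlinarith)
      _ = L/8 * L := by ring
      _ ≤ (L - 1) * (L/4) := by nlinarith
      _ ≤ Real.log (cubeCovNum ε) := key
  · -- tendsto part
    have hlogtend : Tendsto (fun ε : ℝ => Real.log (1/ε)) (𝓝[>] (0:ℝ)) atTop := by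
      have h1 : Tendsto (fun ε : ℝ => 1/ε) (𝓝[>] (0:ℝ)) atTop := by
        simpa [one_div] using tendsto_inv_nhdsGT_zero
      exact Real.tendsto_log_atTop.comp h1
    have hminor : Tendsto (fun ε : ℝ => (Real.log (1/ε) - 1) / 4) (𝓝[>] (0:ℝ)) atTop := by
      apply Tendsto.atTop_div_const (by norm_num)
      exact tendsto_atTop_add_const_right _ (-1) hlogtend |>.congr (fun x => by ring)
    apply tendsto_atTop_mono' _ _ hminor
    have hev : ∀ᶠ ε in 𝓝[>] (0:ℝ), 0 < ε ∧ ε < Real.exp (-2) := by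
      filter_upwards [Ioo_mem_nhdsGT_of_mem (show (0:ℝ) ∈ Set.Ico 0 (Real.exp (-2)) from
        ⟨le_refl 0, Real.exp_pos _⟩)] with ε hε
      exact ⟨hε.1, hε.2⟩
    filter_upwards [hev] with ε hε
    obtain ⟨h1, h2⟩ := hε
    obtain ⟨hN1, key⟩ := log_covnum_lower ε h1 h2
    have hεinv : (1:ℝ) < 1/ε := by
      rw [lt_div_iff₀ h1, one_mul]
      calc ε < Real.exp (-2) := h2
        _ < 1 := by rw [Real.exp_lt_one_iff]; norm_num
    have hL0 : 0 < Real.log (1/ε) := Real.log_pos hεinv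
    rw [div_le_div_iff₀ (by norm_num) hL0]
    calc (Real.log (1/ε) - 1) * Real.log (1/ε)
        = ((Real.log (1/ε) - 1) * (Real.log (1/ε)/4)) * 4 := by ring
      _ ≤ Real.log (cubeCovNum ε) * 4 := by
          apply mul_le_mul_of_nonneg_right key (by norm_num)
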